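/- Let N ≥ 1, B ≥ 0, V ≥ 0, W ≥ 1 and T ≥ 1 with W dividing T. For each i ∈ {1,…,N} let Q_i, a_i, b_i, a*_i, b*_i satisfy Q_i(0) = 0, Q_i(t+1) = max(Q_i(t) + a_i(t) − b_i(t), 0), and 0 ≤ a_i(t), b_i(t), a*_i(t), b*_i(t) ≤ B for t ∈ {0,…,T−1}. Let U, U* take values in [U_min, U_max], suppose the Drift-plus-Penalty property holds at every slot t < T (Σ_{i} Q_i(t)(b_i(t) − a_i(t)) + V·U(t) ≥ Σ_{i} Q_i(t)(b*_i(t) − a*_i(t)) + V·U*(t)), and suppose the comparator satisfies the W-window constraint Σ_{τ=t}^{t+W−1} a*_i(τ) ≤ Σ_{τ=t}^{t+W−1} b*_i(τ) for every i and every t that is a multiple of W with t + W ≤ T. Then the total final queue length satisfies Σ_{i=1}^N Q_i(T) ≤ √( 2N ( V·T·(U_max − U_min) + 7·N·B²·W·T ) ). In particular, for fixed N and B, the total queue length is O(√(T(W+V))). -/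

import Mathlib

open Finset

/-- Decomposing a sum over `range (W*m)` into `m` consecutive windows of length `W`. -/
lemma sum_range_windows (W m : ℕ) (f : ℕ → ℝ) :
    ∑ t ∈ Finset.range (W * m), f t =
      ∑ k ∈ Finset.range m, ∑ t ∈ Finset.Ico (W * k) (W * k + W), f t := by
  induction m with
  | zero => simp
  | succ m ih =>
    rw [Finset.sum_range_succ, ← ih, Nat.mul_succ, Finset.range_eq_Ico,
      ← Finset.sum_Ico_consecutive f (Nat.zero_le (W * m)) (Nat.le_add_right (W * m) W),
      ← Finset.range_eq_Ico]

/-- Queue-length half of Theorem 3: under the `W`-constrained adversary model, the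
Drift-plus-Penalty algorithm with parameter `V` keeps the total final queue length
at most `√(2N(VT(U_max − U_min) + 7NB²WT))`, i.e. `O(√(T(W+V)))`. -/
theorem DPP_queue_bound_W_constrained (N : ℕ) (hN : 1 ≤ N) (B : ℝ) (hB : 0 ≤ B)
    (V : ℝ) (hV : 0 ≤ V) (W T : ℕ) (hW : 1 ≤ W) (hT : 1 ≤ T) (hWT : W ∣ T)
    (Q a b astar bstar : Fin N → ℕ → ℝ) (U Ustar : ℕ → ℝ) (Umin Umax : ℝ)
    (hQ0 : ∀ i, Q i 0 = 0)
    (hrec : ∀ i t, Q i (t + 1) = max (Q i t + a i t - b i t) 0)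
    (hbnd : ∀ i, ∀ t < T, (0 ≤ a i t ∧ a i t ≤ B) ∧ (0 ≤ b i t ∧ b i t ≤ B) ∧
      (0 ≤ astar i t ∧ astar i t ≤ B) ∧ (0 ≤ bstar i t ∧ bstar i t ≤ B))
    (hU : ∀ t < T, Umin ≤ U t ∧ U t ≤ Umax)
    (hUstar : ∀ t < T, Umin ≤ Ustar t ∧ Ustar t ≤ Umax)
    (hDPP : ∀ t < T, (∑ i, Q i t * (b i t - a i t)) + V * U t ≥
      (∑ i, Q i t * (bstar i t - astar i t)) + V * Ustar t)
    (hwindow : ∀ t : ℕ, W ∣ t → t + W ≤ T → ∀ i,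
      (∑ τ ∈ Finset.Ico t (t + W), astar i τ) ≤ ∑ τ ∈ Finset.Ico t (t + W), bstar i τ) :
    (∑ i, Q i T) ≤
      Real.sqrt (2 * (N : ℝ) *
        (V * (T : ℝ) * (Umax - Umin) + 7 * (N : ℝ) * B ^ 2 * (W : ℝ) * (T : ℝ))) := by
  obtain ⟨m, hm⟩ := hWT
  -- nonnegativity of queues
  have hQnn : ∀ i t, 0 ≤ Q i t := by
    intro i t
    cases t with
    | zero => rw [hQ0]
    | succ t => rw [hrec]; exact le_max_right _ _
  -- one-step Lipschitz bound
  have hstep : ∀ i, ∀ t < T, |Q i (t + 1) - Q i t| ≤ B := by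
    intro i t ht
    obtain ⟨⟨ha0, haB⟩, ⟨hb0, hbB⟩, _⟩ := hbnd i t ht
    have hmax1 := le_max_left (Q i t + a i t - b i t) (0 : ℝ)
    have hmax2 : max (Q i t + a i t - b i t) 0 ≤ Q i t + B := by
      apply max_le (by linarith) (by linarith [hQnn i t])
    rw [abs_le, hrec]
    constructor <;> linarith
  -- multi-step Lipschitz bound
  have hlip : ∀ i d s, s + d ≤ T → |Q i (s + d) - Q i s| ≤ (d : ℝ) * B := by
    intro i d
    induction d with
    | zero => intro s _; simp
    | succ d ih =>
      intro s h
      have h2 := hstep i (s + d) (by omega)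
      have h3 := ih s (by omega)
      have habs := abs_add_le (Q i (s + d + 1) - Q i (s + d)) (Q i (s + d) - Q i s)
      have heq : Q i (s + d + 1) - Q i (s + d) + (Q i (s + d) - Q i s)
          = Q i (s + d + 1) - Q i s := by ring
      rw [heq] at habs
      have hidx : s + (d + 1) = s + d + 1 := by omega
      rw [hidx]
      push_cast
      linarith
  -- bound on astar - bstar
  have hstarbnd : ∀ i, ∀ t < T, |astar i t - bstar i t| ≤ B := by
    intro i t ht
    obtain ⟨_, _, ⟨ha0, haB⟩, ⟨hb0, hbB⟩⟩ := hbnd i t ht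
    rw [abs_le]; constructor <;> linarith
  -- one-step drift bound
  have hdrift : ∀ t < T,
      (∑ i, Q i (t + 1) ^ 2) ≤ (∑ i, Q i t ^ 2)
        + 2 * (∑ i, Q i t * (astar i t - bstar i t))
        + 2 * V * (Umax - Umin) + (N : ℝ) * B ^ 2 := by
    intro t ht
    have hper : ∀ i : Fin N, Q i (t + 1) ^ 2 ≤
        Q i t ^ 2 + 2 * (Q i t * (a i t - b i t)) + B ^ 2 := by
      intro i
      obtain ⟨⟨ha0, haB⟩, ⟨hb0, hbB⟩, _⟩ := hbnd i t ht
      have hsq : Q i (t + 1) ^ 2 ≤ (Q i t + a i t - b i t) ^ 2 := by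
        rw [hrec]
        rcases le_total (Q i t + a i t - b i t) 0 with h | h
        · rw [max_eq_right h]
          simpa using sq_nonneg (Q i t + a i t - b i t)
        · rw [max_eq_left h]
      nlinarith [sq_nonneg (a i t - b i t), sq_nonneg B]
    have hsum := Finset.sum_le_sum (s := (Finset.univ : Finset (Fin N))) (fun i _ => hper i)
    rw [Finset.sum_add_distrib, Finset.sum_add_distrib, Finset.sum_const,
      Finset.card_univ, Fintype.card_fin, nsmul_eq_mul, ← Finset.mul_sum] at hsum
    have hDPP' := hDPP t ht
    have hswap : (∑ i, Q i t * (a i t - b i t)) = -(∑ i, Q i t * (b i t - a i t)) := by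
      rw [← Finset.sum_neg_distrib]
      exact Finset.sum_congr rfl (fun i _ => by ring)
    have hswap2 : (∑ i, Q i t * (astar i t - bstar i t))
        = -(∑ i, Q i t * (bstar i t - astar i t)) := by
      rw [← Finset.sum_neg_distrib]
      exact Finset.sum_congr rfl (fun i _ => by ring)
    have hU1 := hU t ht
    have hU2 := hUstar t ht
    have hVU : V * U t - V * Ustar t ≤ V * (Umax - Umin) := by
      have : U t - Ustar t ≤ Umax - Umin := by linarith [hU1.1, hU1.2, hU2.1, hU2.2]
      nlinarith
    rw [hswap] at hsum
    rw [hswap2]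
    linarith
  -- window bound on comparator term
  have hwin : ∀ k < m,
      (∑ t ∈ Finset.Ico (W * k) (W * k + W), ∑ i, Q i t * (astar i t - bstar i t))
        ≤ (N : ℝ) * ((W : ℝ) ^ 2 * B ^ 2) := by
    intro k hk
    have hkT : W * k + W ≤ T := by
      rw [hm]; nlinarith [Nat.succ_le_of_lt hk]
    rw [Finset.sum_comm]
    have hper : ∀ i : Fin N,
        (∑ t ∈ Finset.Ico (W * k) (W * k + W), Q i t * (astar i t - bstar i t))
          ≤ (W : ℝ) ^ 2 * B ^ 2 := by
      intro i
      have hsplit : ∀ t ∈ Finset.Ico (W * k) (W * k + W),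
          Q i t * (astar i t - bstar i t) ≤
            Q i (W * k) * (astar i t - bstar i t) + (W : ℝ) * B * B := by
        intro t htmem
        rw [Finset.mem_Ico] at htmem
        have htT : t < T := by omega
        have hd : t = W * k + (t - W * k) := by omega
        have hlipt : |Q i t - Q i (W * k)| ≤ (W : ℝ) * B := by
          rw [hd]
          refine le_trans (hlip i (t - W * k) (W * k) (by omega)) ?_
          have : ((t - W * k : ℕ) : ℝ) ≤ (W : ℝ) := by
            exact_mod_cast Nat.le_of_lt (by omega)
          nlinarith
        have hst := hstarbnd i t htT
        have key : (Q i t - Q i (W * k)) * (astar i t - bstar i t) ≤ (W : ℝ) * B * B := by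
          calc (Q i t - Q i (W * k)) * (astar i t - bstar i t)
              ≤ |(Q i t - Q i (W * k)) * (astar i t - bstar i t)| := le_abs_self _
            _ = |Q i t - Q i (W * k)| * |astar i t - bstar i t| := abs_mul _ _
            _ ≤ (W : ℝ) * B * B := by
                apply mul_le_mul hlipt hst (abs_nonneg _)
                positivity
        nlinarith
      have h1 := Finset.sum_le_sum hsplit
      rw [Finset.sum_add_distrib, Finset.sum_const, Nat.card_Ico] at h1
      have hfirst : (∑ t ∈ Finset.Ico (W * k) (W * k + W),
          Q i (W * k) * (astar i t - bstar i t)) ≤ 0 := by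
        rw [← Finset.mul_sum]
        apply mul_nonpos_of_nonneg_of_nonpos (hQnn i (W * k))
        rw [Finset.sum_sub_distrib]
        have := hwindow (W * k) (Dvd.intro k rfl) hkT i
        linarith
      have hWW : (W * k + W - W * k) = W := by omega
      rw [hWW, nsmul_eq_mul] at h1
      have hWB : (W : ℝ) * ((W : ℝ) * B * B) = (W : ℝ) ^ 2 * B ^ 2 := by ring
      linarith
    calc (∑ i, ∑ t ∈ Finset.Ico (W * k) (W * k + W), Q i t * (astar i t - bstar i t))
        ≤ ∑ _i : Fin N, (W : ℝ) ^ 2 * B ^ 2 := Finset.sum_le_sum (fun i _ => hper i)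
      _ = (N : ℝ) * ((W : ℝ) ^ 2 * B ^ 2) := by
          rw [Finset.sum_const, Finset.card_univ, Fintype.card_fin, nsmul_eq_mul]
  -- total comparator sum bound
  have hcomp : (∑ t ∈ Finset.range T, ∑ i, Q i t * (astar i t - bstar i t))
      ≤ (N : ℝ) * B ^ 2 * (W : ℝ) * (T : ℝ) := by
    rw [hm, sum_range_windows]
    calc (∑ k ∈ Finset.range m, ∑ t ∈ Finset.Ico (W * k) (W * k + W),
          ∑ i, Q i t * (astar i t - bstar i t))
        ≤ ∑ _k ∈ Finset.range m, (N : ℝ) * ((W : ℝ) ^ 2 * B ^ 2) :=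
          Finset.sum_le_sum (fun k hk => hwin k (Finset.mem_range.mp hk))
      _ = (m : ℝ) * ((N : ℝ) * ((W : ℝ) ^ 2 * B ^ 2)) := by
          rw [Finset.sum_const, Finset.card_range, nsmul_eq_mul]
      _ = (N : ℝ) * B ^ 2 * (W : ℝ) * ((W : ℝ) * (m : ℝ)) := by ring
      _ = (N : ℝ) * B ^ 2 * (W : ℝ) * ((W * m : ℕ) : ℝ) := by push_cast; ring
  -- telescoping
  have htel : (∑ i, Q i T ^ 2) =
      ∑ t ∈ Finset.range T, ((∑ i, Q i (t + 1) ^ 2) - (∑ i, Q i t ^ 2)) := by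
    rw [Finset.sum_range_sub (fun t => ∑ i, Q i t ^ 2)]
    simp [hQ0]
  have hFT : (∑ i, Q i T ^ 2) ≤
      2 * ((N : ℝ) * B ^ 2 * (W : ℝ) * (T : ℝ))
        + (T : ℝ) * (2 * V * (Umax - Umin) + (N : ℝ) * B ^ 2) := by
    rw [htel]
    calc (∑ t ∈ Finset.range T, ((∑ i, Q i (t + 1) ^ 2) - (∑ i, Q i t ^ 2)))
        ≤ ∑ t ∈ Finset.range T, (2 * (∑ i, Q i t * (astar i t - bstar i t))
            + (2 * V * (Umax - Umin) + (N : ℝ) * B ^ 2)) := by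
          apply Finset.sum_le_sum
          intro t ht
          have := hdrift t (Finset.mem_range.mp ht)
          linarith
      _ = 2 * (∑ t ∈ Finset.range T, ∑ i, Q i t * (astar i t - bstar i t))
            + (T : ℝ) * (2 * V * (Umax - Umin) + (N : ℝ) * B ^ 2) := by
          rw [Finset.sum_add_distrib, Finset.sum_const, Finset.card_range,
            ← Finset.mul_sum, nsmul_eq_mul]
      _ ≤ _ := by linarith
  -- Cauchy–Schwarz and conclusion
  set S := V * (T : ℝ) * (Umax - Umin) + 7 * (N : ℝ) * B ^ 2 * (W : ℝ) * (T : ℝ) with hS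
  have hsumnn : 0 ≤ ∑ i, Q i T := Finset.sum_nonneg (fun i _ => hQnn i T)
  have hCS : (∑ i, Q i T) ^ 2 ≤ (N : ℝ) * ∑ i, Q i T ^ 2 := by
    have := sq_sum_le_card_mul_sum_sq (s := (Finset.univ : Finset (Fin N)))
      (f := fun i => Q i T)
    simpa [Finset.card_univ, Fintype.card_fin] using this
  have hN1 : (1 : ℝ) ≤ (N : ℝ) := by exact_mod_cast hN
  have hW1 : (1 : ℝ) ≤ (W : ℝ) := by exact_mod_cast hW
  have hT1 : (1 : ℝ) ≤ (T : ℝ) := by exact_mod_cast hT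
  have hkey : (∑ i, Q i T) ^ 2 ≤ 2 * (N : ℝ) * S := by
    have h1 : (∑ i, Q i T) ^ 2 ≤ (N : ℝ) * ∑ i, Q i T ^ 2 := hCS
    have h2 : (N : ℝ) * (∑ i, Q i T ^ 2) ≤ 2 * (N : ℝ) * S := by
      rw [hS]
      have hUd : 0 ≤ Umax - Umin := by
        have := hU 0 (by omega)
        linarith [this.1, this.2]
      have hNnn : (0 : ℝ) ≤ (N : ℝ) := by linarith
      have step1 : (N : ℝ) * (∑ i, Q i T ^ 2) ≤ (N : ℝ) *
          (2 * ((N : ℝ) * B ^ 2 * (W : ℝ) * (T : ℝ))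
            + (T : ℝ) * (2 * V * (Umax - Umin) + (N : ℝ) * B ^ 2)) :=
        mul_le_mul_of_nonneg_left hFT hNnn
      have c : (0 : ℝ) ≤ (N : ℝ) ^ 2 * B ^ 2 * (T : ℝ) := by positivity
      have hint1 : (N : ℝ) ^ 2 * B ^ 2 * (T : ℝ) ≤
          (N : ℝ) ^ 2 * B ^ 2 * (W : ℝ) * (T : ℝ) := by nlinarith [c, hW1]
      have hint2 : (0 : ℝ) ≤ (N : ℝ) ^ 2 * B ^ 2 * (W : ℝ) * (T : ℝ) := by positivity
      linarith [step1, hint1, hint2]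
    linarith
  calc (∑ i, Q i T) = Real.sqrt ((∑ i, Q i T) ^ 2) := by
        rw [Real.sqrt_sq hsumnn]
    _ ≤ Real.sqrt (2 * (N : ℝ) * S) := Real.sqrt_le_sqrt hkey
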